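/- Let k ≥ 1, let w ∈ G_k be a good involution, let x = t s_1 s_2 ⋯ s_k ∈ B_{k+1}, and for 1 ≤ i ≤ k let x_i = t s_1 ⋯ ŝ_i ⋯ s_k (the product with s_i omitted). Then: (i) xwx⁻¹ ∈ G_{k+1} and xwx⁻¹(1) = 1; (ii) xwx⁻¹t ∈ G_{k+1} and (xwx⁻¹t)(1) = −1; (iii) for 1 ≤ i ≤ k, xw x_i⁻¹ ∈ G_{k+1} if and only if w(i) = i, and in that case (xw x_i⁻¹)(1) = −(i+1). -/

import Mathlib

namespace PaperB

open scoped Classical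

def B (n : ℕ) : Subgroup (Equiv.Perm ℤ) where
  carrier := {w | (∀ i : ℤ, w (-i) = - w i) ∧ ∀ i : ℤ, (n : ℤ) < |i| → w i = i}
  one_mem' := ⟨fun _ => rfl, fun _ _ => rfl⟩
  mul_mem' := by
    rintro a b ⟨ha1, ha2⟩ ⟨hb1, hb2⟩
    refine ⟨fun i => ?_, fun i hi => ?_⟩
    · rw [Equiv.Perm.mul_apply, Equiv.Perm.mul_apply, hb1, ha1]
    · rw [Equiv.Perm.mul_apply, hb2 i hi, ha2 i hi]
  inv_mem' := by
    rintro a ⟨ha1, ha2⟩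
    refine ⟨fun i => a.injective ?_, fun i hi => a.injective ?_⟩
    · rw [← Equiv.Perm.mul_apply, mul_inv_cancel, Equiv.Perm.one_apply, ha1, ← Equiv.Perm.mul_apply, mul_inv_cancel, Equiv.Perm.one_apply]
    · rw [← Equiv.Perm.mul_apply, mul_inv_cancel, Equiv.Perm.one_apply, ha2 i hi]

def t : Equiv.Perm ℤ := Equiv.swap (-1) 1

def s (i : ℕ) : Equiv.Perm ℤ :=
  Equiv.swap (i : ℤ) ((i : ℤ) + 1) * Equiv.swap (-(i : ℤ)) (-((i : ℤ) + 1))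

def gens (n : ℕ) : Set (Equiv.Perm ℤ) := insert t (s '' Set.Ico 1 n)

noncomputable def len (n : ℕ) (w : Equiv.Perm ℤ) : ℕ :=
  sInf {l | ∃ L : List (Equiv.Perm ℤ), (∀ g ∈ L, g ∈ gens n) ∧ L.prod = w ∧ L.length = l}

/-- A model of the Iwahori–Hecke algebra `H_{p,q}(Bₘ)`:  a `ℂ`-algebra `H` together with a
family `T w`, `w ∈ Bₘ`, which is linearly independent, satisfies `T 1 = 1`, and satisfies the
standard multiplication rule
`T w * T g = T (w g)` if `ℓ(w g) > ℓ(w)` and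
`T w * T g = par(g) T (w g) + (1 - par(g)) T w` otherwise,
where `par t = p` and `par sᵢ = q`. -/
structure HeckeModel (m : ℕ) (p q : ℂ) (H : Type) [Ring H] [Algebra ℂ H] where
  T : Equiv.Perm ℤ → H
  T_one : T 1 = 1
  T_mul : ∀ w ∈ B m, ∀ g ∈ gens m,
    T w * T g =
      if len m w < len m (w * g) then T (w * g)
      else (if g = t then p else q) • T (w * g) + (1 - if g = t then p else q) • T w
  free : LinearIndependent ℂ (fun w : {x // x ∈ B m} => T w.1)

/-- The element `-w`, given by `(-w)(i) = -(w i)`. -/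
def negOf (w : Equiv.Perm ℤ) : Equiv.Perm ℤ := (Equiv.neg ℤ : Equiv.Perm ℤ) * w

/-- A good involution in `B_k`. -/
def Good (k : ℕ) (w : Equiv.Perm ℤ) : Prop :=
  w ∈ B k ∧ w * w = 1 ∧ ∀ i : ℤ, 1 ≤ i → i ≤ (k : ℤ) → (w i = i ∨ w i < 0)

/-- `a(w)`: the number of `1 ≤ j ≤ m` with `w j = j`. -/
noncomputable def aFix (m : ℕ) (w : Equiv.Perm ℤ) : ℕ :=
  ((Finset.Icc (1 : ℤ) (m : ℤ)).filter fun j => w j = j).card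

/-- `d(i, w)`: the number of `i < j ≤ m` with `w j = j`. -/
noncomputable def dFix (m : ℕ) (i : ℤ) (w : Equiv.Perm ℤ) : ℕ :=
  ((Finset.Ioc i (m : ℤ)).filter fun j => w j = j).card

/-- `c(w)`: the number of `w`-tidy pairs `{i, j}`, i.e. pairs of distinct indices
`1 ≤ i, j ≤ m` with `-w i < j` and `-w j < i`. -/
noncomputable def cTidy (m : ℕ) (w : Equiv.Perm ℤ) : ℕ :=
  (((Finset.Icc (1 : ℤ) (m : ℤ)) ×ˢ (Finset.Icc (1 : ℤ) (m : ℤ))).filter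
    fun pr => pr.1 < pr.2 ∧ -w pr.1 < pr.2 ∧ -w pr.2 < pr.1).card

/-- `x = t s₁ s₂ ⋯ s_k ∈ B_{k+1}`. -/
def xE (k : ℕ) : Equiv.Perm ℤ := (t :: ((List.range k).map fun j => s (j + 1))).prod

/-- `xᵢ = t s₁ ⋯ ŝᵢ ⋯ s_k ∈ B_{k+1}` (the product with `sᵢ` omitted). -/
def xI (k i : ℕ) : Equiv.Perm ℤ :=
  (t :: ((((List.range k).map fun j => j + 1).filter fun j => j ≠ i).map s)).prod


/-- The parabolic subgroup `S_k ⊆ B_k` generated by `s₁, …, s_{k-1}`. -/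
def Spar (k : ℕ) : Subgroup (Equiv.Perm ℤ) := Subgroup.closure (s '' Set.Ico 1 k)

/-- `c(-w)` for `w ∈ S_k`: the number of neat pairs of `w`, i.e. pairs `{i,j}` of distinct
indices `1 ≤ i, j ≤ k` with `w i < j` and `w j < i`. -/
noncomputable def cNeat (k : ℕ) (w : Equiv.Perm ℤ) : ℕ :=
  (((Finset.Icc (1 : ℤ) (k : ℤ)) ×ˢ (Finset.Icc (1 : ℤ) (k : ℤ))).filter
    fun pr => pr.1 < pr.2 ∧ w pr.1 < pr.2 ∧ w pr.2 < pr.1).card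

/-- The set `X_{0,k}` of distinguished (minimal length) right coset representatives of
`S_k` in `B_k`. -/
def X0 (k : ℕ) : Set (Equiv.Perm ℤ) :=
  {x | x ∈ B k ∧ ∀ u ∈ Spar k, len k x ≤ len k (u * x)}

/-- `Succ(w)` for a good involution `w ∈ G_k`. -/
def Succ (k : ℕ) (w : Equiv.Perm ℤ) : Set (Equiv.Perm ℤ) :=
  {xE k * w * (xE k)⁻¹, xE k * w * (xE k)⁻¹ * t} ∪
    {y | ∃ i : ℕ, 1 ≤ i ∧ i ≤ k ∧ w (i : ℤ) = (i : ℤ) ∧ y = xE k * w * (xI k i)⁻¹}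

/-- The element `c = s_{n+1} s_{n+2} ⋯ s_{n+k} ∈ B_{n+k+1}`. -/
def cElt (n k : ℕ) : Equiv.Perm ℤ := ((List.range k).map fun j => s (n + 1 + j)).prod

/-- The palindromic product `s_{n+k} s_{n+k-1} ⋯ s_{n+i} ⋯ s_{n+k-1} s_{n+k}`. -/
def pal (n k i : ℕ) : Equiv.Perm ℤ :=
  (((List.range (k - i)).map fun j => s (n + k - j)) ++ [s (n + i)] ++
    ((List.range (k - i)).map fun j => s (n + i + 1 + j))).prod

/-- The parabolic subgroup `B_n × S_k` of `B_{n+k}`, generated by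
`{t, s₁, …, s_{n-1}} ∪ {s_{n+1}, …, s_{n+k-1}}` (with `t` omitted when `n = 0`). -/
def P (n k : ℕ) : Subgroup (Equiv.Perm ℤ) :=
  Subgroup.closure
    ((if n = 0 then (∅ : Set (Equiv.Perm ℤ)) else {t}) ∪ s '' Set.Ico 1 n ∪
      s '' Set.Ico (n + 1) (n + k))

/-- The factor `S_k` of `B_n × S_k`, generated by `s_{n+1}, …, s_{n+k-1}`. -/
def SparF (n k : ℕ) : Subgroup (Equiv.Perm ℤ) := Subgroup.closure (s '' Set.Ico (n + 1) (n + k))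

/-- The set `X_{n,k}` of distinguished (minimal length) right coset representatives of
`B_n × S_k` in `B_{n+k}`. -/
def Xnk (n k : ℕ) : Set (Equiv.Perm ℤ) :=
  {x | x ∈ B (n + k) ∧ ∀ u ∈ P n k, len (n + k) x ≤ len (n + k) (u * x)}

/-- The strict Bruhat order on `B_m`: `x < w` iff `x ≠ w` and some reduced expression of `w`
has a subword whose product is `x`. -/
def bruhatLT (m : ℕ) (x w : Equiv.Perm ℤ) : Prop :=
  x ≠ w ∧ ∃ L : List (Equiv.Perm ℤ), (∀ g ∈ L, g ∈ gens m) ∧ L.prod = w ∧ L.length = len m w ∧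
    ∃ L' : List (Equiv.Perm ℤ), L'.Sublist L ∧ L'.prod = x

lemma mem_B_iff {n : ℕ} {w : Equiv.Perm ℤ} :
    w ∈ B n ↔ (∀ i : ℤ, w (-i) = - w i) ∧ ∀ i : ℤ, (n : ℤ) < |i| → w i = i := Iff.rfl

lemma B_mono {n m : ℕ} (h : n ≤ m) : B n ≤ B m := by
  intro w hw
  rw [mem_B_iff] at *
  exact ⟨hw.1, fun i hi => hw.2 i (lt_of_le_of_lt (by exact_mod_cast h) hi)⟩

lemma t_apply (j : ℤ) : t j = if j = 1 then -1 else if j = -1 then 1 else j := by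
  unfold t
  rw [Equiv.swap_apply_def]
  split_ifs <;> omega

lemma t_mem {n : ℕ} (hn : 1 ≤ n) : t ∈ B n := by
  rw [mem_B_iff]
  constructor
  · intro j; rw [t_apply, t_apply]; split_ifs <;> omega
  · intro j hj
    rcases lt_abs.mp hj with h | h <;> rw [t_apply] <;> split_ifs <;> omega

lemma s_apply (i : ℕ) (hi : 1 ≤ i) (j : ℤ) :
    s i j = if j = (i:ℤ) then (i:ℤ)+1 else if j = (i:ℤ)+1 then (i:ℤ)
      else if j = -(i:ℤ) then -((i:ℤ)+1) else if j = -((i:ℤ)+1) then -(i:ℤ) else j := by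
  unfold s
  rw [Equiv.Perm.mul_apply]
  simp only [Equiv.swap_apply_def]
  split_ifs <;> omega

def fE (k : ℕ) (j : ℤ) : ℤ :=
  if 1 ≤ j ∧ j ≤ (k:ℤ) then j+1
  else if j = (k:ℤ)+1 then -1
  else if -(k:ℤ) ≤ j ∧ j ≤ -1 then j-1
  else if j = -((k:ℤ)+1) then 1
  else j

lemma xE_succ (k : ℕ) : xE (k+1) = xE k * s (k+1) := by
  unfold xE
  rw [List.range_succ, List.map_append]
  simp [List.prod_append, mul_assoc]

lemma xE_apply (k : ℕ) : ∀ j : ℤ, xE k j = fE k j := by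
  induction k with
  | zero =>
    intro j
    have h : xE 0 = t := by unfold xE; simp
    rw [h, t_apply]
    simp only [fE]
    split_ifs <;> omega
  | succ k ih =>
    intro j
    rw [xE_succ, Equiv.Perm.mul_apply, ih, s_apply (k+1) (by omega)]
    simp only [fE]
    push_cast
    split_ifs <;> omega

lemma xE_mem (k : ℕ) : xE k ∈ B (k+1) := by
  rw [mem_B_iff]
  constructor
  · intro j; rw [xE_apply, xE_apply]; simp only [fE]; split_ifs <;> omega
  · intro j hj
    push_cast at hj
    rcases lt_abs.mp hj with h | h <;>
      · rw [xE_apply]; simp only [fE]; split_ifs <;> omega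

def fI (k i : ℕ) (j : ℤ) : ℤ :=
  if j = (i:ℤ) then -1
  else if j = -(i:ℤ) then 1
  else if 1 ≤ j ∧ j ≤ (k:ℤ) then j+1
  else if -(k:ℤ) ≤ j ∧ j ≤ -1 then j-1
  else if j = (k:ℤ)+1 then (i:ℤ)+1
  else if j = -((k:ℤ)+1) then -((i:ℤ)+1)
  else j

lemma xI_base (i : ℕ) (hi : 1 ≤ i) : xI i i = xE (i-1) := by
  obtain ⟨m, rfl⟩ : ∃ m, i = m + 1 := ⟨i - 1, by omega⟩
  unfold xI xE
  congr 1
  rw [List.range_succ, List.map_append, List.filter_append]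
  have h2 : ((List.range m).map fun j => j + 1).filter (fun j => j ≠ m+1) =
      (List.range m).map fun j => j + 1 := by
    apply List.filter_eq_self.mpr
    intro a ha
    simp only [List.mem_map, List.mem_range] at ha
    obtain ⟨b, hb, rfl⟩ := ha
    simp only [decide_eq_true_eq]
    omega
  rw [h2]
  simp [List.map_map, Function.comp]

lemma xI_succ (k i : ℕ) (h : i ≤ k) : xI (k+1) i = xI k i * s (k+1) := by
  unfold xI
  have hne : ¬(k + 1 = i) := by omega
  rw [List.range_succ, List.map_append, List.filter_append]
  simp [List.prod_append, mul_assoc, hne]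

set_option maxHeartbeats 2000000 in
lemma xI_apply (k i : ℕ) (hi : 1 ≤ i) (hik : i ≤ k) : ∀ j : ℤ, xI k i j = fI k i j := by
  induction k, hik using Nat.le_induction with
  | base =>
    intro j
    rw [xI_base i hi, xE_apply]
    simp only [fE, fI]
    split_ifs <;> omega
  | succ k hk ih =>
    intro j
    rw [xI_succ k i hk, Equiv.Perm.mul_apply, ih, s_apply (k+1) (by omega)]
    split_ifs with h1 h2 h3 h4
    all_goals simp only [fI]
    all_goals split_ifs <;> omega

set_option maxHeartbeats 2000000 in
lemma xI_mem (k i : ℕ) (hi : 1 ≤ i) (hik : i ≤ k) : xI k i ∈ B (k+1) := by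
  rw [mem_B_iff]
  constructor
  · intro j; rw [xI_apply k i hi hik, xI_apply k i hi hik]; simp only [fI]; split_ifs <;> omega
  · intro j hj
    push_cast at hj
    rcases lt_abs.mp hj with h | h <;>
      · rw [xI_apply k i hi hik]; simp only [fI]; split_ifs <;> omega

set_option maxHeartbeats 2000000 in
theorem succ_good (k : ℕ) (hk : 1 ≤ k) (w : Equiv.Perm ℤ) (hw : Good k w) :
    (Good (k + 1) (xE k * w * (xE k)⁻¹) ∧ (xE k * w * (xE k)⁻¹) 1 = 1) ∧
    (Good (k + 1) (xE k * w * (xE k)⁻¹ * t) ∧ (xE k * w * (xE k)⁻¹ * t) 1 = -1) ∧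
    (∀ i : ℕ, 1 ≤ i → i ≤ k →
      (Good (k + 1) (xE k * w * (xI k i)⁻¹) ↔ w (i : ℤ) = (i : ℤ)) ∧
      (w (i : ℤ) = (i : ℤ) → (xE k * w * (xI k i)⁻¹) 1 = -((i : ℤ) + 1))) := by
  obtain ⟨hwB, hw2, hwg⟩ := hw
  have hww : ∀ a : ℤ, w (w a) = a := fun a => by
    rw [← Equiv.Perm.mul_apply, hw2, Equiv.Perm.one_apply]
  have hwsign : ∀ a : ℤ, w (-a) = -w a := (mem_B_iff.mp hwB).1
  have hwfix : ∀ a : ℤ, ((k:ℤ) < a ∨ a < -(k:ℤ)) → w a = a := fun a ha =>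
    (mem_B_iff.mp hwB).2 a (by
      rcases ha with h | h
      · exact lt_abs.mpr (Or.inl h)
      · exact lt_abs.mpr (Or.inr (by omega)))
  have hrange : ∀ a : ℤ, 1 ≤ a → a ≤ (k:ℤ) → w a = a ∨ (-(k:ℤ) ≤ w a ∧ w a ≤ -1) := by
    intro a h1 h2
    rcases hwg a h1 h2 with h | h
    · exact Or.inl h
    · refine Or.inr ⟨?_, by omega⟩
      by_contra hc
      have h3 := hwfix (w a) (Or.inr (by omega))
      rw [hww] at h3
      omega
  have hx1 : ∀ j : ℤ, 1 ≤ j → j ≤ (k:ℤ) → xE k j = j + 1 := fun j h1 h2 => by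
    rw [xE_apply]; simp only [fE]; split_ifs <;> omega
  have hxtop : xE k ((k:ℤ)+1) = -1 := by
    rw [xE_apply]; simp only [fE]; split_ifs <;> omega
  have hxneg : ∀ j : ℤ, -(k:ℤ) ≤ j → j ≤ -1 → xE k j = j - 1 := fun j h1 h2 => by
    rw [xE_apply]; simp only [fE]; split_ifs <;> omega
  have hxnegtop : xE k (-((k:ℤ)+1)) = 1 := by
    rw [xE_apply]; simp only [fE]; split_ifs <;> omega
  have inv_eq : ∀ (x : Equiv.Perm ℤ) (a b : ℤ), x a = b → x⁻¹ b = a := fun x a b h => by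
    rw [← h, ← Equiv.Perm.mul_apply, inv_mul_cancel, Equiv.Perm.one_apply]
  -- Part (i)
  have huB : xE k * w * (xE k)⁻¹ ∈ B (k+1) :=
    mul_mem (mul_mem (xE_mem k) (B_mono (Nat.le_succ k) hwB)) (inv_mem (xE_mem k))
  have hu2 : (xE k * w * (xE k)⁻¹) * (xE k * w * (xE k)⁻¹) = 1 := by
    have h : (xE k * w * (xE k)⁻¹) * (xE k * w * (xE k)⁻¹) = xE k * (w * w) * (xE k)⁻¹ := by
      group
    rw [h, hw2, mul_one, mul_inv_cancel]
  have hxinv1 : (xE k)⁻¹ 1 = -((k:ℤ)+1) := inv_eq _ _ _ hxnegtop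
  have hu1 : (xE k * w * (xE k)⁻¹) 1 = 1 := by
    rw [Equiv.Perm.mul_apply, Equiv.Perm.mul_apply, hxinv1, hwfix _ (Or.inr (by omega)),
      hxnegtop]
  have hug : ∀ j : ℤ, 2 ≤ j → j ≤ (k:ℤ)+1 →
      ((xE k * w * (xE k)⁻¹) j = j ∨ (xE k * w * (xE k)⁻¹) j < 0) := by
    intro j h1 h2
    have hxinvj : (xE k)⁻¹ j = j - 1 :=
      inv_eq _ _ _ (by rw [hx1 (j-1) (by omega) (by omega)]; ring)
    rw [Equiv.Perm.mul_apply, Equiv.Perm.mul_apply, hxinvj]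
    rcases hrange (j-1) (by omega) (by omega) with h | h
    · left; rw [h, hx1 (j-1) (by omega) (by omega)]; ring
    · right; rw [hxneg _ h.1 h.2]; omega
  have hGood1 : Good (k+1) (xE k * w * (xE k)⁻¹) := by
    refine ⟨huB, hu2, fun j h1 h2 => ?_⟩
    push_cast at h2
    rcases eq_or_lt_of_le h1 with h | h
    · left; rw [← h]; exact hu1
    · exact hug j (by omega) h2
  -- Part (ii)
  have hun1 : (xE k * w * (xE k)⁻¹) (-1) = -1 := by
    have h := (mem_B_iff.mp huB).1 1
    rw [hu1] at h; exact h
  have ht1 : t 1 = -1 := by rw [t_apply]; norm_num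
  have htm1 : t (-1) = 1 := by rw [t_apply]; norm_num
  have hto : ∀ a : ℤ, a ≠ 1 → a ≠ -1 → t a = a := fun a h1 h2 => by
    rw [t_apply, if_neg h1, if_neg h2]
  have hcomm : (xE k * w * (xE k)⁻¹) * t = t * (xE k * w * (xE k)⁻¹) := by
    ext a
    rw [Equiv.Perm.mul_apply (xE k * w * (xE k)⁻¹) t a,
      Equiv.Perm.mul_apply t (xE k * w * (xE k)⁻¹) a]
    by_cases h1 : a = 1
    · subst h1; rw [ht1, hun1, hu1, ht1]
    · by_cases h2 : a = -1
      · subst h2; rw [htm1, hu1, hun1, htm1]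
      · have hne1 : (xE k * w * (xE k)⁻¹) a ≠ 1 := fun h =>
          h1 ((xE k * w * (xE k)⁻¹).injective (h.trans hu1.symm))
        have hne2 : (xE k * w * (xE k)⁻¹) a ≠ -1 := fun h =>
          h2 ((xE k * w * (xE k)⁻¹).injective (h.trans hun1.symm))
        rw [hto a h1 h2, hto _ hne1 hne2]
  have ht2 : t * t = 1 := Equiv.swap_mul_self (-1) 1
  have hu2' : (xE k * w * (xE k)⁻¹ * t) * (xE k * w * (xE k)⁻¹ * t) = 1 := by
    have h : (xE k * w * (xE k)⁻¹ * t) * (xE k * w * (xE k)⁻¹ * t)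
        = (xE k * w * (xE k)⁻¹) * (t * (xE k * w * (xE k)⁻¹)) * t := by group
    rw [h, ← hcomm]
    have h2 : (xE k * w * (xE k)⁻¹) * ((xE k * w * (xE k)⁻¹) * t) * t
        = ((xE k * w * (xE k)⁻¹) * (xE k * w * (xE k)⁻¹)) * (t * t) := by group
    rw [h2, hu2, ht2, mul_one]
  have hu1' : (xE k * w * (xE k)⁻¹ * t) 1 = -1 := by
    rw [Equiv.Perm.mul_apply, ht1, hun1]
  have hGood2 : Good (k+1) (xE k * w * (xE k)⁻¹ * t) := by
    refine ⟨mul_mem huB (t_mem (by omega)), hu2', fun j h1 h2 => ?_⟩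
    push_cast at h2
    rcases eq_or_lt_of_le h1 with h | h
    · right; rw [← h, hu1']; norm_num
    · have heq : (xE k * w * (xE k)⁻¹ * t) j = (xE k * w * (xE k)⁻¹) j := by
        rw [Equiv.Perm.mul_apply, hto j (by omega) (by omega)]
      rw [heq]; exact hug j (by omega) h2
  refine ⟨⟨hGood1, hu1⟩, ⟨hGood2, hu1'⟩, ?_⟩
  -- Part (iii)
  intro i hi1 hik
  have hziB : xI k i ∈ B (k+1) := xI_mem k i hi1 hik
  have hz_pos : ∀ j : ℤ, 1 ≤ j → j ≤ (k:ℤ) → j ≠ (i:ℤ) → xI k i j = j + 1 := fun j h1 h2 h3 => by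
    rw [xI_apply k i hi1 hik]; simp only [fI]; split_ifs <;> omega
  have hz_negi : xI k i (-(i:ℤ)) = 1 := by
    rw [xI_apply k i hi1 hik]; simp only [fI]; split_ifs <;> omega
  have hz_top : xI k i ((k:ℤ)+1) = (i:ℤ)+1 := by
    rw [xI_apply k i hi1 hik]; simp only [fI]; split_ifs <;> omega
  have hzinv1 : (xI k i)⁻¹ 1 = -(i:ℤ) := inv_eq _ _ _ hz_negi
  have hzinvtop : (xI k i)⁻¹ ((i:ℤ)+1) = (k:ℤ)+1 := inv_eq _ _ _ hz_top
  have hzinvj : ∀ j : ℤ, 2 ≤ j → j ≤ (k:ℤ)+1 → j ≠ (i:ℤ)+1 → (xI k i)⁻¹ j = j - 1 :=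
    fun j h1 h2 h3 => inv_eq _ _ _ (by rw [hz_pos (j-1) (by omega) (by omega) (by omega)]; ring)
  have huiB : xE k * w * (xI k i)⁻¹ ∈ B (k+1) :=
    mul_mem (mul_mem (xE_mem k) (B_mono (Nat.le_succ k) hwB)) (inv_mem hziB)
  have huiSign : ∀ a : ℤ, (xE k * w * (xI k i)⁻¹) (-a) = -((xE k * w * (xI k i)⁻¹) a) :=
    (mem_B_iff.mp huiB).1
  have huifix : ∀ a : ℤ, ((k:ℤ)+1 < a ∨ a < -((k:ℤ)+1)) → (xE k * w * (xI k i)⁻¹) a = a :=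
    fun a ha => (mem_B_iff.mp huiB).2 a (by
      have hc : ((k+1:ℕ):ℤ) = (k:ℤ)+1 := by push_cast; ring
      rw [hc]
      rcases ha with h | h
      · exact lt_abs.mpr (Or.inl h)
      · exact lt_abs.mpr (Or.inr (by omega)))
  have hui_pos : ∀ b : ℤ, 2 ≤ b → b ≤ (k:ℤ)+1 → b ≠ (i:ℤ)+1 →
      (xE k * w * (xI k i)⁻¹) b = xE k (w (b-1)) := fun b h1 h2 h3 => by
    rw [Equiv.Perm.mul_apply, Equiv.Perm.mul_apply, hzinvj b h1 h2 h3]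
  constructor
  · constructor
    · -- Good → w i = i
      intro hG
      by_contra hne
      have hwi : w (i:ℤ) < 0 := by
        rcases hwg (i:ℤ) (by omega) (by omega) with h | h
        · exact absurd h hne
        · exact h
      have hb : -(k:ℤ) ≤ w (i:ℤ) ∧ w (i:ℤ) ≤ -1 := by
        rcases hrange (i:ℤ) (by omega) (by omega) with h | h
        · omega
        · exact h
      have hval : (xE k * w * (xI k i)⁻¹) 1 = -(w (i:ℤ)) + 1 := by
        rw [Equiv.Perm.mul_apply, Equiv.Perm.mul_apply, hzinv1, hwsign,
          hx1 (-(w (i:ℤ))) (by omega) (by omega)]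
      rcases hG.2.2 1 (by norm_num) (by push_cast; omega) with h | h <;> rw [hval] at h <;> omega
    · -- w i = i → Good
      intro hwi
      have hu_at1 : (xE k * w * (xI k i)⁻¹) 1 = -((i:ℤ)+1) := by
        rw [Equiv.Perm.mul_apply, Equiv.Perm.mul_apply, hzinv1, hwsign, hwi,
          hxneg (-(i:ℤ)) (by omega) (by omega)]
        ring
      have hu_ati : (xE k * w * (xI k i)⁻¹) ((i:ℤ)+1) = -1 := by
        rw [Equiv.Perm.mul_apply, Equiv.Perm.mul_apply, hzinvtop,
          hwfix _ (Or.inl (by omega)), hxtop]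
      have key : ∀ b : ℤ, 1 ≤ b → b ≤ (k:ℤ)+1 →
          (xE k * w * (xI k i)⁻¹) ((xE k * w * (xI k i)⁻¹) b) = b := by
        intro b h1 h2
        by_cases hb1 : b = 1
        · subst hb1
          rw [hu_at1, huiSign ((i:ℤ)+1), hu_ati]
          norm_num
        · by_cases hbi : b = (i:ℤ)+1
          · subst hbi
            rw [hu_ati, huiSign 1, hu_at1]
            ring
          · rw [hui_pos b (by omega) h2 hbi]
            rcases hrange (b-1) (by omega) (by omega) with h | h
            · rw [h, hx1 (b-1) (by omega) (by omega), show b-1+1 = b from by ring,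
                hui_pos b (by omega) h2 hbi, h, hx1 (b-1) (by omega) (by omega)]
              ring
            · have hm := hww (b-1)
              have hmne : w (b-1) ≠ -(i:ℤ) := by
                intro hc
                rw [hc, hwsign, hwi] at hm
                omega
              rw [hxneg (w (b-1)) h.1 h.2,
                show w (b-1) - 1 = -(1 - w (b-1)) from by ring, huiSign,
                hui_pos (1 - w (b-1)) (by omega) (by omega) (by omega),
                show 1 - w (b-1) - 1 = -(w (b-1)) from by ring,
                hwsign, hm, hxneg (-(b-1)) (by omega) (by omega)]
              ring
      have hu2i : (xE k * w * (xI k i)⁻¹) * (xE k * w * (xI k i)⁻¹) = 1 := by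
        ext a
        rw [Equiv.Perm.mul_apply, Equiv.Perm.one_apply]
        rcases lt_trichotomy a 0 with h | h | h
        · by_cases hin : -((k:ℤ)+1) ≤ a
          · rw [show a = -(-a) from (neg_neg a).symm, huiSign (-a),
              huiSign ((xE k * w * (xI k i)⁻¹) (-a)), key (-a) (by omega) (by omega)]
          · rw [huifix a (Or.inr (by omega)), huifix a (Or.inr (by omega))]
        · rw [h]
          have h0 : (xE k * w * (xI k i)⁻¹) 0 = 0 := by
            have h1 := huiSign 0
            rw [neg_zero] at h1
            omega
          rw [h0, h0]
        · by_cases hin : a ≤ (k:ℤ)+1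
          · exact key a (by omega) hin
          · rw [huifix a (Or.inl (by omega)), huifix a (Or.inl (by omega))]
      have hugood : ∀ j : ℤ, 1 ≤ j → j ≤ (k:ℤ)+1 →
          ((xE k * w * (xI k i)⁻¹) j = j ∨ (xE k * w * (xI k i)⁻¹) j < 0) := by
        intro j h1 h2
        by_cases hj1 : j = 1
        · right; rw [hj1, hu_at1]; omega
        · by_cases hji : j = (i:ℤ)+1
          · right; rw [hji, hu_ati]; norm_num
          · rw [hui_pos j (by omega) h2 hji]
            rcases hrange (j-1) (by omega) (by omega) with h | h
            · left; rw [h, hx1 (j-1) (by omega) (by omega)]; ring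
            · right; rw [hxneg _ h.1 h.2]; omega
      exact ⟨huiB, hu2i, fun j hj1 hj2 => hugood j hj1 (by push_cast at hj2; exact hj2)⟩
  · -- value
    intro hwi
    rw [Equiv.Perm.mul_apply, Equiv.Perm.mul_apply, hzinv1, hwsign, hwi,
      hxneg (-(i:ℤ)) (by omega) (by omega)]
    ring

end PaperB
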